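/- arXiv:1903.10062 — 2 statements merged into one kernel-verified Lean document; each statement's English description precedes it below -/
import Mathlib

section
/- Let γ and α be bounded operators on a Hilbert space H with γ self-adjoint, such that the 2×2 block operator matrix with entries (γ, α; α*, 1 − γ̄) satisfies 0 ≤ (γ, α; α*, 1 − γ̄) ≤ 1 on H ⊕ H (where γ̄ denotes the complex conjugate of γ). Then γ² + α α* ≤ γ as operators on H. In particular 0 ≤ γ ≤ 1. -/
open ContinuousLinearMap

private lemma re_flip {H : Type*} [NormedAddCommGroup H] [InnerProductSpace ℂ H] (x y : H) :
    (inner ℂ x y : ℂ).re = (inner ℂ y x : ℂ).re := by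
  rw [(inner_conj_symm x y).symm]; exact Complex.conj_re _

private lemma re_self {H : Type*} [NormedAddCommGroup H] [InnerProductSpace ℂ H] (x : H) :
    (inner ℂ x x : ℂ).re = ‖x‖ ^ 2 := by
  rw [← RCLike.re_to_complex]; exact inner_self_eq_norm_sq x

/-- Structural operator inequality for HFB states: if the block operator matrix
`(γ, α; α*, 1 - γ̄)` satisfies `0 ≤ Γ ≤ 1` (expressed via its quadratic form on `H ⊕ H`),
where `γ̄ = J γ J` with `J` a conjugation (antilinear isometric involution), then
`γ² + α α* ≤ γ`; in particular `0 ≤ γ ≤ 1`. -/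
theorem hfb_operator_inequality {H : Type*} [NormedAddCommGroup H] [InnerProductSpace ℂ H]
    [CompleteSpace H]
    (γ α gbar : H →L[ℂ] H)
    (hγ : IsSelfAdjoint γ)
    (J : H → H)
    (hJadd : ∀ x y, J (x + y) = J x + J y)
    (hJsmul : ∀ (c : ℂ) x, J (c • x) = (starRingEnd ℂ) c • J x)
    (hJinv : ∀ x, J (J x) = x)
    (hJinner : ∀ x y, (inner ℂ (J x) (J y) : ℂ) = (starRingEnd ℂ) (inner ℂ x y))
    (hgbar : ∀ x, gbar x = J (γ (J x)))
    -- `0 ≤ Γ` on `H ⊕ H`, via the quadratic form of the block matrix: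
    (hpos : ∀ f g : H, 0 ≤ (inner ℂ f (γ f) : ℂ).re + 2 * (inner ℂ f (α g) : ℂ).re
        + ((inner ℂ g g : ℂ).re - (inner ℂ g (gbar g) : ℂ).re))
    -- `Γ ≤ 1` on `H ⊕ H`:
    (hle : ∀ f g : H, (inner ℂ f (γ f) : ℂ).re + 2 * (inner ℂ f (α g) : ℂ).re
        + ((inner ℂ g g : ℂ).re - (inner ℂ g (gbar g) : ℂ).re) ≤ ‖f‖ ^ 2 + ‖g‖ ^ 2) :
    (γ - (γ ∘L γ + α ∘L (ContinuousLinearMap.adjoint α))).IsPositive ∧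
      γ.IsPositive ∧ ((1 : H →L[ℂ] H) - γ).IsPositive := by
  have sa_g2 : IsSelfAdjoint (γ ∘L γ) := by
    rw [IsSelfAdjoint, star_eq_adjoint, adjoint_comp, hγ.adjoint_eq]
  have sa_aa : IsSelfAdjoint (α ∘L ContinuousLinearMap.adjoint α) := by
    rw [IsSelfAdjoint, star_eq_adjoint, adjoint_comp, adjoint_adjoint]
  refine ⟨⟨isSelfAdjoint_iff_isSymmetric.mp (hγ.sub (sa_g2.add sa_aa)), fun f => ?_⟩, ⟨isSelfAdjoint_iff_isSymmetric.mp hγ, fun f => ?_⟩,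
      ⟨isSelfAdjoint_iff_isSymmetric.mp ((IsSelfAdjoint.one _).sub hγ), fun f => ?_⟩⟩
  · -- main inequality
    set B := ContinuousLinearMap.adjoint α f with hBdef
    have h1 := hle (γ f) B
    have h2 := hpos (f - γ f) (-B)
    simp only [inner_sub_left, inner_sub_right, map_sub, map_neg, inner_neg_left,
      inner_neg_right, neg_neg, Complex.sub_re, Complex.neg_re, Complex.add_re] at h2
    have eA : (inner ℂ (γ f) (γ f) : ℂ).re = ‖γ f‖ ^ 2 := re_self _
    have eBre : (inner ℂ f (α B) : ℂ).re = ‖B‖ ^ 2 := by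
      rw [(ContinuousLinearMap.adjoint_inner_left α B f).symm, ← hBdef, re_self]
    have key : 0 ≤ (inner ℂ f (γ f) : ℂ).re - (inner ℂ f (γ (γ f)) : ℂ).re
        - (inner ℂ f (α B) : ℂ).re := by linarith
    rw [ContinuousLinearMap.reApplyInnerSelf]
    simp only [ContinuousLinearMap.sub_apply, ContinuousLinearMap.add_apply,
      ContinuousLinearMap.comp_apply, inner_sub_left, inner_add_left, map_sub, map_add,
      RCLike.re_to_complex, Complex.sub_re, Complex.add_re]
    have f1 := re_flip (γ f) f
    have f2 := re_flip (γ (γ f)) f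
    have f3 := re_flip (α B) f
    linarith
  · -- γ ≥ 0
    have h := hpos f 0
    simp only [map_zero, inner_zero_right, inner_zero_left, Complex.zero_re, mul_zero,
      sub_zero, add_zero] at h
    rw [ContinuousLinearMap.reApplyInnerSelf]
    rw [RCLike.re_to_complex, re_flip]
    exact h
  · -- γ ≤ 1
    have h := hle f 0
    simp only [map_zero, inner_zero_right, inner_zero_left, Complex.zero_re, mul_zero,
      sub_zero, add_zero, norm_zero] at h
    rw [ContinuousLinearMap.reApplyInnerSelf]
    simp only [ContinuousLinearMap.sub_apply, ContinuousLinearMap.one_apply, inner_sub_left,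
      RCLike.re_to_complex, Complex.sub_re, re_self]
    have := re_flip (γ f) f
    linarith
end

section
/- Suppose the massless Chandrasekhar problem at unit mass and critical coupling, E^{Ch}_{τ_c}(1)|_{m=0} = inf { K_cl ∫ρ^{4/3} − (τ_c/2) D(ρ,ρ) : ρ ≥ 0, ∫ρ = 1 }, equals 0, and that the Hardy–Littlewood–Sobolev inequality (τ_c/2) D(ρ,ρ) ≤ K_cl ‖ρ‖_{4/3}^{4/3} ‖ρ‖_1^{2/3} holds for all admissible ρ with some ρ* achieving equality only when ∫ρ* = 1 after normalization. Then for every 0 < ν < 1, the problem E^{Ch}_{τ_c}(ν)|_{m=0} = 0 admits no minimizer: there is no ρ ≥ 0 in L¹ ∩ L^{4/3}(ℝ³) with ∫ρ = ν and K_cl ∫ρ^{4/3} = (τ_c/2) D(ρ,ρ). -/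
open MeasureTheory

/-- Nonexistence of minimizers for the massless critical Chandrasekhar problem at
subcritical mass `0 < ν < 1`: no nonnegative `ρ ∈ L¹ ∩ L^{4/3}` with `∫ρ = ν` can satisfy
`K_cl ∫ρ^{4/3} = (τ_c/2) D(ρ,ρ)`. -/
theorem massless_critical_no_minimizer
    (τc Kcl : ℝ) (hτc : 0 < τc) (hKcl : 0 < Kcl)
    -- `E^{Ch}_{τ_c}(1)|_{m=0} = 0`:
    (hE : sInf ((fun ρ : EuclideanSpace ℝ (Fin 3) → ℝ =>
        Kcl * (∫ x : EuclideanSpace ℝ (Fin 3), ρ x ^ ((4 : ℝ) / 3))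
          - τc / 2 * (∫ x : EuclideanSpace ℝ (Fin 3), ∫ y : EuclideanSpace ℝ (Fin 3),
              ρ x * ρ y / ‖x - y‖)) ''
      {ρ | (∀ x, 0 ≤ ρ x) ∧
        MemLp ρ 1 (volume : Measure (EuclideanSpace ℝ (Fin 3))) ∧
        MemLp ρ (4 / 3) (volume : Measure (EuclideanSpace ℝ (Fin 3))) ∧
        (∫ x : EuclideanSpace ℝ (Fin 3), ρ x) = 1}) = 0)
    -- the Hardy–Littlewood–Sobolev inequality with optimal constant `τ_c`:
    (hHLS : ∀ ρ : EuclideanSpace ℝ (Fin 3) → ℝ, (∀ x, 0 ≤ ρ x) →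
      MemLp ρ 1 (volume : Measure (EuclideanSpace ℝ (Fin 3))) →
      MemLp ρ (4 / 3) (volume : Measure (EuclideanSpace ℝ (Fin 3))) →
      τc / 2 * (∫ x : EuclideanSpace ℝ (Fin 3), ∫ y : EuclideanSpace ℝ (Fin 3),
          ρ x * ρ y / ‖x - y‖)
        ≤ Kcl * (∫ x : EuclideanSpace ℝ (Fin 3), ρ x ^ ((4 : ℝ) / 3))
            * (∫ x : EuclideanSpace ℝ (Fin 3), ρ x) ^ ((2 : ℝ) / 3))
    -- some normalized optimizer `ρ*` achieves equality with `∫ρ* = 1`: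
    (hopt : ∃ ρstar : EuclideanSpace ℝ (Fin 3) → ℝ, (∀ x, 0 ≤ ρstar x) ∧
      MemLp ρstar 1 (volume : Measure (EuclideanSpace ℝ (Fin 3))) ∧
      MemLp ρstar (4 / 3) (volume : Measure (EuclideanSpace ℝ (Fin 3))) ∧
      (∫ x : EuclideanSpace ℝ (Fin 3), ρstar x) = 1 ∧
      τc / 2 * (∫ x : EuclideanSpace ℝ (Fin 3), ∫ y : EuclideanSpace ℝ (Fin 3),
          ρstar x * ρstar y / ‖x - y‖)
        = Kcl * (∫ x : EuclideanSpace ℝ (Fin 3), ρstar x ^ ((4 : ℝ) / 3)))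
    (ν : ℝ) (hν0 : 0 < ν) (hν1 : ν < 1) :
    ¬ ∃ ρ : EuclideanSpace ℝ (Fin 3) → ℝ, (∀ x, 0 ≤ ρ x) ∧
      MemLp ρ 1 (volume : Measure (EuclideanSpace ℝ (Fin 3))) ∧
      MemLp ρ (4 / 3) (volume : Measure (EuclideanSpace ℝ (Fin 3))) ∧
      (∫ x : EuclideanSpace ℝ (Fin 3), ρ x) = ν ∧
      Kcl * (∫ x : EuclideanSpace ℝ (Fin 3), ρ x ^ ((4 : ℝ) / 3))
        = τc / 2 * (∫ x : EuclideanSpace ℝ (Fin 3), ∫ y : EuclideanSpace ℝ (Fin 3),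
            ρ x * ρ y / ‖x - y‖) := by
  rintro ⟨ρ, hpos, h1, h43, hmass, heq⟩
  set I := ∫ x : EuclideanSpace ℝ (Fin 3), ρ x ^ ((4 : ℝ) / 3) with hI
  -- I > 0 since ρ is not a.e. zero
  have hInt : Integrable (fun x : EuclideanSpace ℝ (Fin 3) => ρ x ^ ((4 : ℝ) / 3)) volume := by
    have := h43.integrable_norm_rpow (by norm_num)
      (ENNReal.div_lt_top (by norm_num) (by norm_num)).ne
    have htr : ((4 : ENNReal) / 3).toReal = (4 : ℝ) / 3 := by
      rw [ENNReal.toReal_div]; norm_num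
    refine this.congr (Filter.Eventually.of_forall fun x => ?_)
    simp only [htr, Real.norm_of_nonneg (hpos x)]
  have hIpos : 0 < I := by
    rcases lt_or_eq_of_le (integral_nonneg (f := fun x : EuclideanSpace ℝ (Fin 3) => ρ x ^ ((4 : ℝ) / 3)) fun x => Real.rpow_nonneg (hpos x) _) with h | h
    · exact h
    · exfalso
      have hz : (fun x : EuclideanSpace ℝ (Fin 3) => ρ x ^ ((4 : ℝ) / 3)) =ᵐ[volume] 0 := by
        rw [← integral_eq_zero_iff_of_nonneg
          (fun x => Real.rpow_nonneg (hpos x) _) hInt]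
        exact h.symm
      have hz' : ρ =ᵐ[volume] 0 := by
        filter_upwards [hz] with x hx
        have : ρ x ^ ((4 : ℝ) / 3) = 0 := hx
        simpa using (Real.rpow_eq_zero (hpos x) (by norm_num)).mp this
      have : (∫ x : EuclideanSpace ℝ (Fin 3), ρ x) = 0 := integral_eq_zero_of_ae hz'
      rw [hmass] at this
      exact hν0.ne' this
  -- HLS bound
  have hhls := hHLS ρ hpos h1 h43
  rw [← heq, hmass] at hhls
  have hν23 : ν ^ ((2 : ℝ) / 3) < 1 :=
    Real.rpow_lt_one hν0.le hν1 (by norm_num)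
  have : Kcl * I * ν ^ ((2 : ℝ) / 3) < Kcl * I * 1 := by
    have hKI : 0 < Kcl * I := mul_pos hKcl hIpos
    exact (mul_lt_mul_iff_right₀ hKI).mpr hν23
  rw [mul_one] at this
  exact absurd hhls (not_le.mpr this)
end
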